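/- Consider the double complex of the Inoue surface S^± with parameter q ∈ R: A = Λ⟨φ1,φ2,φ̄1,φ̄2⟩ with ∂φ1 = (1/(2i))φ1∧φ2, ∂̄φ1 = (1/(2i))φ2∧φ̄1 + (qi/2)φ2∧φ̄2, ∂φ2 = 0, ∂̄φ2 = (1/(2i))φ2∧φ̄2, and conjugate relations. Then the de Rham cohomology of the total complex has b1 = 1, generated by the class of φ2 - φ̄2, and b3 = 1, generated by the class of φ1∧φ2∧φ̄1 - q φ1∧φ2∧φ̄2 - φ1∧φ̄1∧φ̄2 + q φ2∧φ̄1∧φ̄2, while b2 = 0. -/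
import Mathlib


open Finset Module Complex

noncomputable section

/-- Index type: subsets of the 4 generators. Generators: 0 ↦ φ1, 1 ↦ φ2, 2 ↦ φ̄1, 3 ↦ φ̄2. -/
abbrev ι : Type := Finset (Fin 4)

/-- The underlying 16-dimensional vector space of Λ⟨φ1,φ2,φ̄1,φ̄2⟩. -/
abbrev V : Type := ι → ℂ

/-- Basis vector corresponding to the wedge of the generators in `S` (in increasing order). -/
def e (S : ι) : V := fun T => if T = S then 1 else 0

/-- Structure constants of the exterior (wedge) product on basis elements. -/
def wedgeB (S T : ι) : V :=
  if Disjoint S T then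
    ((-1 : ℂ) ^ (((S ×ˢ T).filter (fun x => x.2 < x.1)).card)) • e (S ∪ T)
  else 0

/-- The wedge product on `V`. -/
def mulV (v w : V) : V := ∑ S : ι, ∑ T : ι, (v S * w T) • wedgeB S T

/-- The odd derivation determined by its values `g` on the generators. -/
def der (g : Fin 4 → V) : V →ₗ[ℂ] V :=
  (Pi.basisFun ℂ ι).constr ℂ (fun S =>
    ∑ i ∈ S, ((-1 : ℂ) ^ ((S.filter (fun j => j < i)).card)) •
      mulV (g i) (e (S.erase i)))

/-- Holomorphic degree of a basis index. -/
def pdeg (S : ι) : ℕ := (S ∩ ({0, 1} : Finset (Fin 4))).card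

/-- Anti-holomorphic degree of a basis index. -/
def qdeg (S : ι) : ℕ := (S ∩ ({2, 3} : Finset (Fin 4))).card

/-- The bidegree-(p,q) component `A^{p,q}`. -/
def Apq (p q : ℕ) : Submodule ℂ V :=
  Submodule.span ℂ ((fun S => e S) '' {S : ι | pdeg S = p ∧ qdeg S = q})

/-- The total-degree-k component `A^k`. -/
def Ak (k : ℕ) : Submodule ℂ V :=
  Submodule.span ℂ ((fun S => e S) '' {S : ι | S.card = k})

/-- Dimension of Dolbeault cohomology `H^{p,q}_∂̄ = ker ∂̄ / im ∂̄` in bidegree (p,q). -/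
def hD (delbar : V →ₗ[ℂ] V) (p q : ℕ) : ℕ :=
  finrank ℂ (↥(Apq p q ⊓ LinearMap.ker delbar) ⧸
    Submodule.comap (Apq p q ⊓ LinearMap.ker delbar).subtype
      (Submodule.map delbar (Apq p (q - 1))))

/-- Dimension of Bott-Chern cohomology `H^{p,q}_BC = (ker ∂ ∩ ker ∂̄)/im ∂∂̄` in bidegree (p,q). -/
def hBC (del delbar : V →ₗ[ℂ] V) (p q : ℕ) : ℕ :=
  finrank ℂ (↥(Apq p q ⊓ LinearMap.ker del ⊓ LinearMap.ker delbar) ⧸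
    Submodule.comap (Apq p q ⊓ LinearMap.ker del ⊓ LinearMap.ker delbar).subtype
      (Submodule.map (del ∘ₗ delbar) (Apq (p - 1) (q - 1))))

/-- Dimension of Aeppli cohomology `H^{p,q}_A = ker ∂∂̄ / (im ∂ + im ∂̄)` in bidegree (p,q). -/
def hA (del delbar : V →ₗ[ℂ] V) (p q : ℕ) : ℕ :=
  finrank ℂ (↥(Apq p q ⊓ LinearMap.ker (del ∘ₗ delbar)) ⧸
    Submodule.comap (Apq p q ⊓ LinearMap.ker (del ∘ₗ delbar)).subtype
      (Submodule.map del (Apq (p - 1) q) ⊔ Submodule.map delbar (Apq p (q - 1))))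

/-- Dimension of the degree-k de Rham cohomology of the total complex with `d = ∂ + ∂̄`. -/
def betti (d : V →ₗ[ℂ] V) (k : ℕ) : ℕ :=
  finrank ℂ (↥(Ak k ⊓ LinearMap.ker d) ⧸
    Submodule.comap (Ak k ⊓ LinearMap.ker d).subtype
      (Submodule.map d (Ak (k - 1))))

/-- The coefficient 1/(2i) of the Inoue S^± model. -/
def cSP : ℂ := 1 / (2 * Complex.I)

/-- The `∂` operator of the Inoue S^± model (parameter q ∈ ℝ): ∂φ1 = (1/(2i))φ1∧φ2,
∂φ2 = 0, ∂φ̄1 = (1/(2i))φ1∧φ̄2 + (qi/2)φ2∧φ̄2, ∂φ̄2 = (1/(2i))φ2∧φ̄2 (conjugate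
relations). -/
def delSP (q : ℝ) : V →ₗ[ℂ] V :=
  der ![cSP • e {0, 1}, 0,
        cSP • e {0, 3} + (((q : ℂ) * Complex.I) / 2) • e {1, 3},
        cSP • e {1, 3}]

/-- The `∂̄` operator of the Inoue S^± model: ∂̄φ1 = (1/(2i))φ2∧φ̄1 + (qi/2)φ2∧φ̄2,
∂̄φ2 = (1/(2i))φ2∧φ̄2, ∂̄φ̄1 = -(1/(2i))φ̄1∧φ̄2, ∂̄φ̄2 = 0. -/
def delbarSP (q : ℝ) : V →ₗ[ℂ] V :=
  der ![cSP • e {1, 2} + (((q : ℂ) * Complex.I) / 2) • e {1, 3},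
        cSP • e {1, 3}, (-cSP) • e {2, 3}, 0]

/-- The total differential of the Inoue S^± complex. -/
def dSP (q : ℝ) : V →ₗ[ℂ] V := delSP q + delbarSP q

lemma e_basisFun (S : ι) : (Pi.basisFun ℂ ι) S = e S := by
  ext T; simp [e, Pi.basisFun_apply, Pi.single_apply]
lemma der_apply_e (g : Fin 4 → V) (S : ι) :
    der g (e S) = ∑ i ∈ S, ((-1 : ℂ) ^ ((S.filter (fun j => j < i)).card)) •
      mulV (g i) (e (S.erase i)) := by
  rw [← e_basisFun, der, Basis.constr_basis]
lemma mulV_add_left (u v w : V) : mulV (u + v) w = mulV u w + mulV v w := by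
  simp [mulV, add_mul, add_smul, Finset.sum_add_distrib]
lemma mulV_smul_left (a : ℂ) (v w : V) : mulV (a • v) w = a • mulV v w := by
  simp [mulV, mul_assoc, smul_smul, Finset.smul_sum]
lemma mulV_zero_left (w : V) : mulV 0 w = 0 := by simp [mulV]
lemma mulV_e (A B : ι) : mulV (e A) (e B) = wedgeB A B := by
  simp [mulV, e, ite_mul, mul_ite, ite_smul, Finset.sum_ite_eq]
lemma wedgeB_eq (A B C : ι) (n : ℕ) (h1 : Disjoint A B)
    (h2 : ((A ×ˢ B).filter (fun x => x.2 < x.1)).card = n) (h3 : A ∪ B = C) :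
    wedgeB A B = ((-1 : ℂ) ^ n) • e C := by rw [wedgeB, if_pos h1, h2, h3]
lemma wedgeB_zero (A B : ι) (h : ¬ Disjoint A B) : wedgeB A B = 0 := by rw [wedgeB, if_neg h]

lemma dEE (q : ℝ) : dSP q (e (∅ : ι)) = 0 := by
  rw [dSP, LinearMap.add_apply, delSP, delbarSP, der_apply_e, der_apply_e]
  simp

lemma dE0 (q : ℝ) : dSP q (e {0}) = cSP • e {0,1} + cSP • e {1,2} + (((q : ℂ) * Complex.I) / 2) • e {1,3} := by
  rw [dSP, LinearMap.add_apply, delSP, delbarSP, der_apply_e, der_apply_e]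
  simp only [Finset.sum_singleton]
  simp only [Matrix.cons_val_zero, Matrix.cons_val_one, Matrix.head_cons, Matrix.cons_val_two, Matrix.tail_cons, Matrix.cons_val_three,
    mulV_smul_left, mulV_add_left, mulV_zero_left, mulV_e,
    show (({0} : ι).erase 0) = (∅ : ι) from by decide,
    show ((({0} : ι).filter (fun j => j < 0)).card) = 0 from by decide,
    show wedgeB {0,1} (∅ : ι) = ((-1 : ℂ) ^ 0) • e {0,1} from wedgeB_eq _ _ _ _ (by decide) (by decide) (by decide),
    show wedgeB {1,2} (∅ : ι) = ((-1 : ℂ) ^ 0) • e {1,2} from wedgeB_eq _ _ _ _ (by decide) (by decide) (by decide),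
    show wedgeB {1,3} (∅ : ι) = ((-1 : ℂ) ^ 0) • e {1,3} from wedgeB_eq _ _ _ _ (by decide) (by decide) (by decide)]
  module

lemma dE1 (q : ℝ) : dSP q (e {1}) = cSP • e {1,3} := by
  rw [dSP, LinearMap.add_apply, delSP, delbarSP, der_apply_e, der_apply_e]
  simp only [Finset.sum_singleton]
  simp only [Matrix.cons_val_zero, Matrix.cons_val_one, Matrix.head_cons, Matrix.cons_val_two, Matrix.tail_cons, Matrix.cons_val_three,
    mulV_smul_left, mulV_add_left, mulV_zero_left, mulV_e,
    show (({1} : ι).erase 1) = (∅ : ι) from by decide,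
    show ((({1} : ι).filter (fun j => j < 1)).card) = 0 from by decide,
    show wedgeB {1,3} (∅ : ι) = ((-1 : ℂ) ^ 0) • e {1,3} from wedgeB_eq _ _ _ _ (by decide) (by decide) (by decide)]
  module

lemma dE2 (q : ℝ) : dSP q (e {2}) = cSP • e {0,3} + (((q : ℂ) * Complex.I) / 2) • e {1,3} + (-cSP) • e {2,3} := by
  rw [dSP, LinearMap.add_apply, delSP, delbarSP, der_apply_e, der_apply_e]
  simp only [Finset.sum_singleton]
  simp only [Matrix.cons_val_zero, Matrix.cons_val_one, Matrix.head_cons, Matrix.cons_val_two, Matrix.tail_cons, Matrix.cons_val_three,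
    mulV_smul_left, mulV_add_left, mulV_zero_left, mulV_e,
    show (({2} : ι).erase 2) = (∅ : ι) from by decide,
    show ((({2} : ι).filter (fun j => j < 2)).card) = 0 from by decide,
    show wedgeB {0,3} (∅ : ι) = ((-1 : ℂ) ^ 0) • e {0,3} from wedgeB_eq _ _ _ _ (by decide) (by decide) (by decide),
    show wedgeB {1,3} (∅ : ι) = ((-1 : ℂ) ^ 0) • e {1,3} from wedgeB_eq _ _ _ _ (by decide) (by decide) (by decide),
    show wedgeB {2,3} (∅ : ι) = ((-1 : ℂ) ^ 0) • e {2,3} from wedgeB_eq _ _ _ _ (by decide) (by decide) (by decide)]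
  module

lemma dE3 (q : ℝ) : dSP q (e {3}) = cSP • e {1,3} := by
  rw [dSP, LinearMap.add_apply, delSP, delbarSP, der_apply_e, der_apply_e]
  simp only [Finset.sum_singleton]
  simp only [Matrix.cons_val_zero, Matrix.cons_val_one, Matrix.head_cons, Matrix.cons_val_two, Matrix.tail_cons, Matrix.cons_val_three,
    mulV_smul_left, mulV_add_left, mulV_zero_left, mulV_e,
    show (({3} : ι).erase 3) = (∅ : ι) from by decide,
    show ((({3} : ι).filter (fun j => j < 3)).card) = 0 from by decide,
    show wedgeB {1,3} (∅ : ι) = ((-1 : ℂ) ^ 0) • e {1,3} from wedgeB_eq _ _ _ _ (by decide) (by decide) (by decide)]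
  module

lemma dE01 (q : ℝ) : dSP q (e {0,1}) = (-cSP) • e {0,1,3} := by
  rw [dSP, LinearMap.add_apply, delSP, delbarSP, der_apply_e, der_apply_e]
  simp only [Finset.sum_insert (by decide : (0 : Fin 4) ∉ ({1} : Finset (Fin 4))), Finset.sum_singleton]
  simp only [Matrix.cons_val_zero, Matrix.cons_val_one, Matrix.head_cons, Matrix.cons_val_two, Matrix.tail_cons, Matrix.cons_val_three,
    mulV_smul_left, mulV_add_left, mulV_zero_left, mulV_e,
    show (({0,1} : ι).erase 0) = ({1} : ι) from by decide,
    show ((({0,1} : ι).filter (fun j => j < 0)).card) = 0 from by decide,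
    show wedgeB {0,1} {1} = 0 from wedgeB_zero _ _ (by decide),
    show wedgeB {1,2} {1} = 0 from wedgeB_zero _ _ (by decide),
    show wedgeB {1,3} {1} = 0 from wedgeB_zero _ _ (by decide),
    show (({0,1} : ι).erase 1) = ({0} : ι) from by decide,
    show ((({0,1} : ι).filter (fun j => j < 1)).card) = 1 from by decide,
    show wedgeB {1,3} {0} = ((-1 : ℂ) ^ 2) • e {0,1,3} from wedgeB_eq _ _ _ _ (by decide) (by decide) (by decide)]
  module

lemma dE02 (q : ℝ) : dSP q (e {0,2}) = cSP • e {0,1,2} + (-(((q : ℂ) * Complex.I) / 2)) • e {0,1,3} + cSP • e {0,2,3} + (-(((q : ℂ) * Complex.I) / 2)) • e {1,2,3} := by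
  rw [dSP, LinearMap.add_apply, delSP, delbarSP, der_apply_e, der_apply_e]
  simp only [Finset.sum_insert (by decide : (0 : Fin 4) ∉ ({2} : Finset (Fin 4))), Finset.sum_singleton]
  simp only [Matrix.cons_val_zero, Matrix.cons_val_one, Matrix.head_cons, Matrix.cons_val_two, Matrix.tail_cons, Matrix.cons_val_three,
    mulV_smul_left, mulV_add_left, mulV_zero_left, mulV_e,
    show (({0,2} : ι).erase 0) = ({2} : ι) from by decide,
    show ((({0,2} : ι).filter (fun j => j < 0)).card) = 0 from by decide,
    show wedgeB {0,1} {2} = ((-1 : ℂ) ^ 0) • e {0,1,2} from wedgeB_eq _ _ _ _ (by decide) (by decide) (by decide),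
    show wedgeB {1,2} {2} = 0 from wedgeB_zero _ _ (by decide),
    show wedgeB {1,3} {2} = ((-1 : ℂ) ^ 1) • e {1,2,3} from wedgeB_eq _ _ _ _ (by decide) (by decide) (by decide),
    show (({0,2} : ι).erase 2) = ({0} : ι) from by decide,
    show ((({0,2} : ι).filter (fun j => j < 2)).card) = 1 from by decide,
    show wedgeB {0,3} {0} = 0 from wedgeB_zero _ _ (by decide),
    show wedgeB {1,3} {0} = ((-1 : ℂ) ^ 2) • e {0,1,3} from wedgeB_eq _ _ _ _ (by decide) (by decide) (by decide),
    show wedgeB {2,3} {0} = ((-1 : ℂ) ^ 2) • e {0,2,3} from wedgeB_eq _ _ _ _ (by decide) (by decide) (by decide)]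
  module

lemma dE03 (q : ℝ) : dSP q (e {0,3}) = cSP • e {1,2,3} := by
  rw [dSP, LinearMap.add_apply, delSP, delbarSP, der_apply_e, der_apply_e]
  simp only [Finset.sum_insert (by decide : (0 : Fin 4) ∉ ({3} : Finset (Fin 4))), Finset.sum_singleton]
  simp only [Matrix.cons_val_zero, Matrix.cons_val_one, Matrix.head_cons, Matrix.cons_val_two, Matrix.tail_cons, Matrix.cons_val_three,
    mulV_smul_left, mulV_add_left, mulV_zero_left, mulV_e,
    show (({0,3} : ι).erase 0) = ({3} : ι) from by decide,
    show ((({0,3} : ι).filter (fun j => j < 0)).card) = 0 from by decide,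
    show wedgeB {0,1} {3} = ((-1 : ℂ) ^ 0) • e {0,1,3} from wedgeB_eq _ _ _ _ (by decide) (by decide) (by decide),
    show wedgeB {1,2} {3} = ((-1 : ℂ) ^ 0) • e {1,2,3} from wedgeB_eq _ _ _ _ (by decide) (by decide) (by decide),
    show wedgeB {1,3} {3} = 0 from wedgeB_zero _ _ (by decide),
    show (({0,3} : ι).erase 3) = ({0} : ι) from by decide,
    show ((({0,3} : ι).filter (fun j => j < 3)).card) = 1 from by decide,
    show wedgeB {1,3} {0} = ((-1 : ℂ) ^ 2) • e {0,1,3} from wedgeB_eq _ _ _ _ (by decide) (by decide) (by decide)]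
  module

lemma dE12 (q : ℝ) : dSP q (e {1,2}) = cSP • e {0,1,3} := by
  rw [dSP, LinearMap.add_apply, delSP, delbarSP, der_apply_e, der_apply_e]
  simp only [Finset.sum_insert (by decide : (1 : Fin 4) ∉ ({2} : Finset (Fin 4))), Finset.sum_singleton]
  simp only [Matrix.cons_val_zero, Matrix.cons_val_one, Matrix.head_cons, Matrix.cons_val_two, Matrix.tail_cons, Matrix.cons_val_three,
    mulV_smul_left, mulV_add_left, mulV_zero_left, mulV_e,
    show (({1,2} : ι).erase 1) = ({2} : ι) from by decide,
    show ((({1,2} : ι).filter (fun j => j < 1)).card) = 0 from by decide,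
    show wedgeB {1,3} {2} = ((-1 : ℂ) ^ 1) • e {1,2,3} from wedgeB_eq _ _ _ _ (by decide) (by decide) (by decide),
    show (({1,2} : ι).erase 2) = ({1} : ι) from by decide,
    show ((({1,2} : ι).filter (fun j => j < 2)).card) = 1 from by decide,
    show wedgeB {0,3} {1} = ((-1 : ℂ) ^ 1) • e {0,1,3} from wedgeB_eq _ _ _ _ (by decide) (by decide) (by decide),
    show wedgeB {1,3} {1} = 0 from wedgeB_zero _ _ (by decide),
    show wedgeB {2,3} {1} = ((-1 : ℂ) ^ 2) • e {1,2,3} from wedgeB_eq _ _ _ _ (by decide) (by decide) (by decide)]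
  module

lemma dE13 (q : ℝ) : dSP q (e {1,3}) = 0 := by
  rw [dSP, LinearMap.add_apply, delSP, delbarSP, der_apply_e, der_apply_e]
  simp only [Finset.sum_insert (by decide : (1 : Fin 4) ∉ ({3} : Finset (Fin 4))), Finset.sum_singleton]
  simp only [Matrix.cons_val_zero, Matrix.cons_val_one, Matrix.head_cons, Matrix.cons_val_two, Matrix.tail_cons, Matrix.cons_val_three,
    mulV_smul_left, mulV_add_left, mulV_zero_left, mulV_e,
    show (({1,3} : ι).erase 1) = ({3} : ι) from by decide,
    show ((({1,3} : ι).filter (fun j => j < 1)).card) = 0 from by decide,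
    show wedgeB {1,3} {3} = 0 from wedgeB_zero _ _ (by decide),
    show (({1,3} : ι).erase 3) = ({1} : ι) from by decide,
    show ((({1,3} : ι).filter (fun j => j < 3)).card) = 1 from by decide,
    show wedgeB {1,3} {1} = 0 from wedgeB_zero _ _ (by decide)]
  module

lemma dE23 (q : ℝ) : dSP q (e {2,3}) = cSP • e {1,2,3} := by
  rw [dSP, LinearMap.add_apply, delSP, delbarSP, der_apply_e, der_apply_e]
  simp only [Finset.sum_insert (by decide : (2 : Fin 4) ∉ ({3} : Finset (Fin 4))), Finset.sum_singleton]
  simp only [Matrix.cons_val_zero, Matrix.cons_val_one, Matrix.head_cons, Matrix.cons_val_two, Matrix.tail_cons, Matrix.cons_val_three,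
    mulV_smul_left, mulV_add_left, mulV_zero_left, mulV_e,
    show (({2,3} : ι).erase 2) = ({3} : ι) from by decide,
    show ((({2,3} : ι).filter (fun j => j < 2)).card) = 0 from by decide,
    show wedgeB {0,3} {3} = 0 from wedgeB_zero _ _ (by decide),
    show wedgeB {1,3} {3} = 0 from wedgeB_zero _ _ (by decide),
    show wedgeB {2,3} {3} = 0 from wedgeB_zero _ _ (by decide),
    show (({2,3} : ι).erase 3) = ({2} : ι) from by decide,
    show ((({2,3} : ι).filter (fun j => j < 3)).card) = 1 from by decide,
    show wedgeB {1,3} {2} = ((-1 : ℂ) ^ 1) • e {1,2,3} from wedgeB_eq _ _ _ _ (by decide) (by decide) (by decide)]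
  module

lemma dE012 (q : ℝ) : dSP q (e {0,1,2}) = 0 := by
  rw [dSP, LinearMap.add_apply, delSP, delbarSP, der_apply_e, der_apply_e]
  simp only [Finset.sum_insert (by decide : (0 : Fin 4) ∉ ({1,2} : Finset (Fin 4))), Finset.sum_insert (by decide : (1 : Fin 4) ∉ ({2} : Finset (Fin 4))), Finset.sum_singleton]
  simp only [Matrix.cons_val_zero, Matrix.cons_val_one, Matrix.head_cons, Matrix.cons_val_two, Matrix.tail_cons, Matrix.cons_val_three,
    mulV_smul_left, mulV_add_left, mulV_zero_left, mulV_e,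
    show (({0,1,2} : ι).erase 0) = ({1,2} : ι) from by decide,
    show ((({0,1,2} : ι).filter (fun j => j < 0)).card) = 0 from by decide,
    show wedgeB {0,1} {1,2} = 0 from wedgeB_zero _ _ (by decide),
    show wedgeB {1,2} {1,2} = 0 from wedgeB_zero _ _ (by decide),
    show wedgeB {1,3} {1,2} = 0 from wedgeB_zero _ _ (by decide),
    show (({0,1,2} : ι).erase 1) = ({0,2} : ι) from by decide,
    show ((({0,1,2} : ι).filter (fun j => j < 1)).card) = 1 from by decide,
    show wedgeB {1,3} {0,2} = ((-1 : ℂ) ^ 3) • e {0,1,2,3} from wedgeB_eq _ _ _ _ (by decide) (by decide) (by decide),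
    show (({0,1,2} : ι).erase 2) = ({0,1} : ι) from by decide,
    show ((({0,1,2} : ι).filter (fun j => j < 2)).card) = 2 from by decide,
    show wedgeB {0,3} {0,1} = 0 from wedgeB_zero _ _ (by decide),
    show wedgeB {1,3} {0,1} = 0 from wedgeB_zero _ _ (by decide),
    show wedgeB {2,3} {0,1} = ((-1 : ℂ) ^ 4) • e {0,1,2,3} from wedgeB_eq _ _ _ _ (by decide) (by decide) (by decide)]
  module

lemma dE013 (q : ℝ) : dSP q (e {0,1,3}) = 0 := by
  rw [dSP, LinearMap.add_apply, delSP, delbarSP, der_apply_e, der_apply_e]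
  simp only [Finset.sum_insert (by decide : (0 : Fin 4) ∉ ({1,3} : Finset (Fin 4))), Finset.sum_insert (by decide : (1 : Fin 4) ∉ ({3} : Finset (Fin 4))), Finset.sum_singleton]
  simp only [Matrix.cons_val_zero, Matrix.cons_val_one, Matrix.head_cons, Matrix.cons_val_two, Matrix.tail_cons, Matrix.cons_val_three,
    mulV_smul_left, mulV_add_left, mulV_zero_left, mulV_e,
    show (({0,1,3} : ι).erase 0) = ({1,3} : ι) from by decide,
    show ((({0,1,3} : ι).filter (fun j => j < 0)).card) = 0 from by decide,
    show wedgeB {0,1} {1,3} = 0 from wedgeB_zero _ _ (by decide),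
    show wedgeB {1,2} {1,3} = 0 from wedgeB_zero _ _ (by decide),
    show wedgeB {1,3} {1,3} = 0 from wedgeB_zero _ _ (by decide),
    show (({0,1,3} : ι).erase 1) = ({0,3} : ι) from by decide,
    show ((({0,1,3} : ι).filter (fun j => j < 1)).card) = 1 from by decide,
    show wedgeB {1,3} {0,3} = 0 from wedgeB_zero _ _ (by decide),
    show (({0,1,3} : ι).erase 3) = ({0,1} : ι) from by decide,
    show ((({0,1,3} : ι).filter (fun j => j < 3)).card) = 2 from by decide,
    show wedgeB {1,3} {0,1} = 0 from wedgeB_zero _ _ (by decide)]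
  module

lemma dE023 (q : ℝ) : dSP q (e {0,2,3}) = 0 := by
  rw [dSP, LinearMap.add_apply, delSP, delbarSP, der_apply_e, der_apply_e]
  simp only [Finset.sum_insert (by decide : (0 : Fin 4) ∉ ({2,3} : Finset (Fin 4))), Finset.sum_insert (by decide : (2 : Fin 4) ∉ ({3} : Finset (Fin 4))), Finset.sum_singleton]
  simp only [Matrix.cons_val_zero, Matrix.cons_val_one, Matrix.head_cons, Matrix.cons_val_two, Matrix.tail_cons, Matrix.cons_val_three,
    mulV_smul_left, mulV_add_left, mulV_zero_left, mulV_e,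
    show (({0,2,3} : ι).erase 0) = ({2,3} : ι) from by decide,
    show ((({0,2,3} : ι).filter (fun j => j < 0)).card) = 0 from by decide,
    show wedgeB {0,1} {2,3} = ((-1 : ℂ) ^ 0) • e {0,1,2,3} from wedgeB_eq _ _ _ _ (by decide) (by decide) (by decide),
    show wedgeB {1,2} {2,3} = 0 from wedgeB_zero _ _ (by decide),
    show wedgeB {1,3} {2,3} = 0 from wedgeB_zero _ _ (by decide),
    show (({0,2,3} : ι).erase 2) = ({0,3} : ι) from by decide,
    show ((({0,2,3} : ι).filter (fun j => j < 2)).card) = 1 from by decide,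
    show wedgeB {0,3} {0,3} = 0 from wedgeB_zero _ _ (by decide),
    show wedgeB {1,3} {0,3} = 0 from wedgeB_zero _ _ (by decide),
    show wedgeB {2,3} {0,3} = 0 from wedgeB_zero _ _ (by decide),
    show (({0,2,3} : ι).erase 3) = ({0,2} : ι) from by decide,
    show ((({0,2,3} : ι).filter (fun j => j < 3)).card) = 2 from by decide,
    show wedgeB {1,3} {0,2} = ((-1 : ℂ) ^ 3) • e {0,1,2,3} from wedgeB_eq _ _ _ _ (by decide) (by decide) (by decide)]
  module

lemma dE123 (q : ℝ) : dSP q (e {1,2,3}) = 0 := by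
  rw [dSP, LinearMap.add_apply, delSP, delbarSP, der_apply_e, der_apply_e]
  simp only [Finset.sum_insert (by decide : (1 : Fin 4) ∉ ({2,3} : Finset (Fin 4))), Finset.sum_insert (by decide : (2 : Fin 4) ∉ ({3} : Finset (Fin 4))), Finset.sum_singleton]
  simp only [Matrix.cons_val_zero, Matrix.cons_val_one, Matrix.head_cons, Matrix.cons_val_two, Matrix.tail_cons, Matrix.cons_val_three,
    mulV_smul_left, mulV_add_left, mulV_zero_left, mulV_e,
    show (({1,2,3} : ι).erase 1) = ({2,3} : ι) from by decide,
    show ((({1,2,3} : ι).filter (fun j => j < 1)).card) = 0 from by decide,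
    show wedgeB {1,3} {2,3} = 0 from wedgeB_zero _ _ (by decide),
    show (({1,2,3} : ι).erase 2) = ({1,3} : ι) from by decide,
    show ((({1,2,3} : ι).filter (fun j => j < 2)).card) = 1 from by decide,
    show wedgeB {0,3} {1,3} = 0 from wedgeB_zero _ _ (by decide),
    show wedgeB {1,3} {1,3} = 0 from wedgeB_zero _ _ (by decide),
    show wedgeB {2,3} {1,3} = 0 from wedgeB_zero _ _ (by decide),
    show (({1,2,3} : ι).erase 3) = ({1,2} : ι) from by decide,
    show ((({1,2,3} : ι).filter (fun j => j < 3)).card) = 2 from by decide,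
    show wedgeB {1,3} {1,2} = 0 from wedgeB_zero _ _ (by decide)]
  module

lemma e_apply_ne {S T : ι} (h : T ≠ S) : e S T = 0 := by simp [e, h]

def suppAk (k : ℕ) : Submodule ℂ V where
  carrier := {v | ∀ T : ι, T.card ≠ k → v T = 0}
  add_mem' := by intro a b ha hb T hT; simp [ha T hT, hb T hT]
  zero_mem' := by intro T hT; rfl
  smul_mem' := by intro c a ha T hT; simp [ha T hT]

lemma mem_Ak_iff {k : ℕ} {v : V} : v ∈ Ak k ↔ ∀ T : ι, T.card ≠ k → v T = 0 := by
  constructor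
  · intro hv
    have hle : Ak k ≤ suppAk k := by
      rw [Ak, Submodule.span_le]
      rintro x ⟨S, hS, rfl⟩ T hT
      exact e_apply_ne (fun h => hT (h ▸ hS))
    exact hle hv
  · intro h
    have hrepr : v = ∑ S ∈ Finset.univ.filter (fun S : ι => S.card = k), v S • e S := by
      funext T
      rw [Finset.sum_apply]
      simp only [Pi.smul_apply, e, smul_eq_mul, mul_ite, mul_one, mul_zero]
      rw [Finset.sum_ite_eq]
      by_cases hT : T.card = k
      · simp [hT]
      · simp [hT, h T hT]
    rw [hrepr]
    exact Submodule.sum_mem _ (fun S hS => Submodule.smul_mem _ _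
      (Submodule.subset_span ⟨S, (Finset.mem_filter.mp hS).2, rfl⟩))

lemma e_mem_Ak {S : ι} {k : ℕ} (h : S.card = k) : e S ∈ Ak k :=
  Submodule.subset_span ⟨S, h, rfl⟩

lemma Ak_repr {k : ℕ} {v : V} (hv : v ∈ Ak k) :
    v = ∑ S ∈ Finset.univ.filter (fun S : ι => S.card = k), v S • e S := by
  have h := mem_Ak_iff.mp hv
  funext T
  rw [Finset.sum_apply]
  simp only [Pi.smul_apply, e, smul_eq_mul, mul_ite, mul_one, mul_zero]
  rw [Finset.sum_ite_eq]
  by_cases hT : T.card = k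
  · simp [hT]
  · simp [hT, h T hT]

lemma repr1 {v : V} (hv : v ∈ Ak 1) :
    v = v {0} • e {0} + v {1} • e {1} + v {2} • e {2} + v {3} • e {3} := by
  conv_lhs => rw [Ak_repr hv]
  rw [show Finset.univ.filter (fun S : ι => S.card = 1) =
      ({{0},{1},{2},{3}} : Finset ι) from by decide]
  rw [Finset.sum_insert (by decide), Finset.sum_insert (by decide),
      Finset.sum_insert (by decide), Finset.sum_singleton]
  abel

lemma repr2 {v : V} (hv : v ∈ Ak 2) :
    v = v {0,1} • e {0,1} + v {0,2} • e {0,2} + v {0,3} • e {0,3} +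
        v {1,2} • e {1,2} + v {1,3} • e {1,3} + v {2,3} • e {2,3} := by
  conv_lhs => rw [Ak_repr hv]
  rw [show Finset.univ.filter (fun S : ι => S.card = 2) =
      ({{0,1},{0,2},{0,3},{1,2},{1,3},{2,3}} : Finset ι) from by decide]
  rw [Finset.sum_insert (by decide), Finset.sum_insert (by decide),
      Finset.sum_insert (by decide), Finset.sum_insert (by decide),
      Finset.sum_insert (by decide), Finset.sum_singleton]
  abel

lemma repr3 {v : V} (hv : v ∈ Ak 3) :
    v = v {0,1,2} • e {0,1,2} + v {0,1,3} • e {0,1,3} +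
        v {0,2,3} • e {0,2,3} + v {1,2,3} • e {1,2,3} := by
  conv_lhs => rw [Ak_repr hv]
  rw [show Finset.univ.filter (fun S : ι => S.card = 3) =
      ({{0,1,2},{0,1,3},{0,2,3},{1,2,3}} : Finset ι) from by decide]
  rw [Finset.sum_insert (by decide), Finset.sum_insert (by decide),
      Finset.sum_insert (by decide), Finset.sum_singleton]
  abel

example (a b : ℂ) (h : a • e {0,1} + b • e {1,2} = 0) : a = 0 := by
  have := congrFun h {0,1}
  simp (config := { decide := true }) [e] at this
  exact this

lemma cSP_ne : cSP ≠ 0 := by simp [cSP, Complex.I_ne_zero]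

lemma hmap0 (q : ℝ) : Submodule.map (dSP q) (Ak 0) = ⊥ := by
  rw [Ak, show {S : ι | S.card = 0} = {(∅ : ι)} from by ext S; simp [Finset.card_eq_zero],
     Set.image_singleton, Submodule.map_span, Set.image_singleton, dEE,
     Submodule.span_zero_singleton]

lemma hK1 (q : ℝ) : Ak 1 ⊓ LinearMap.ker (dSP q) = Submodule.span ℂ {e {1} - e {3}} := by
  apply le_antisymm
  · intro v hv
    obtain ⟨hv1, hv2⟩ := Submodule.mem_inf.mp hv
    rw [LinearMap.mem_ker] at hv2
    have h0 := repr1 hv1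
    have hd : v {0} • dSP q (e {0}) + v {1} • dSP q (e {1}) + v {2} • dSP q (e {2})
        + v {3} • dSP q (e {3}) = 0 := by
      rw [← map_smul, ← map_smul, ← map_smul, ← map_smul, ← map_add, ← map_add, ← map_add,
        ← h0, hv2]
    rw [dE0 q, dE1 q, dE2 q, dE3 q] at hd
    have h01 := congrFun hd {0,1}
    have h03 := congrFun hd {0,3}
    have h13 := congrFun hd {1,3}
    simp (config := { decide := true }) [e] at h01 h03 h13
    have hv0 : v {0} = 0 := h01.resolve_right cSP_ne
    have hw2 : v {2} = 0 := h03.resolve_right cSP_ne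
    rw [hv0, hw2] at h13
    have h13' : (v {1} + v {3}) * cSP = 0 := by linear_combination h13
    have hv3 : v {3} = -v {1} := by
      rcases mul_eq_zero.mp h13' with h' | h'
      · linear_combination h'
      · exact absurd h' cSP_ne
    refine Submodule.mem_span_singleton.mpr ⟨v {1}, ?_⟩
    conv_rhs => rw [h0]
    rw [hv0, hw2, hv3]
    module
  · rw [Submodule.span_le, Set.singleton_subset_iff]
    refine Submodule.mem_inf.mpr ⟨Submodule.sub_mem _ (e_mem_Ak (by decide)) (e_mem_Ak (by decide)), LinearMap.mem_ker.mpr ?_⟩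
    rw [map_sub, dE1 q, dE3 q, sub_self]
lemma hmap1_le (q : ℝ) :
    Submodule.map (dSP q) (Ak 1) ≤ Ak 2 ⊓ LinearMap.ker (dSP q) := by
  rw [Ak, Submodule.map_span, Submodule.span_le]
  rintro x ⟨y, ⟨S, hS, rfl⟩, rfl⟩
  rcases (by decide : ∀ S : ι, S.card = 1 → (S = {0} ∨ S = {1} ∨ S = {2} ∨ S = {3})) S hS
    with rfl | rfl | rfl | rfl
  · rw [dE0 q]
    refine Submodule.mem_inf.mpr ⟨?_, LinearMap.mem_ker.mpr ?_⟩
    · exact add_mem (add_mem (Submodule.smul_mem _ _ (e_mem_Ak (by decide)))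
        (Submodule.smul_mem _ _ (e_mem_Ak (by decide))))
        (Submodule.smul_mem _ _ (e_mem_Ak (by decide)))
    · rw [map_add, map_add, map_smul, map_smul, map_smul, dE01 q, dE12 q, dE13 q]
      module
  · rw [dE1 q]
    refine Submodule.mem_inf.mpr ⟨Submodule.smul_mem _ _ (e_mem_Ak (by decide)),
      LinearMap.mem_ker.mpr ?_⟩
    rw [map_smul, dE13 q]; module
  · rw [dE2 q]
    refine Submodule.mem_inf.mpr ⟨?_, LinearMap.mem_ker.mpr ?_⟩
    · exact add_mem (add_mem (Submodule.smul_mem _ _ (e_mem_Ak (by decide)))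
        (Submodule.smul_mem _ _ (e_mem_Ak (by decide))))
        (Submodule.smul_mem _ _ (e_mem_Ak (by decide)))
    · rw [map_add, map_add, map_smul, map_smul, map_smul, dE03 q, dE13 q, dE23 q]
      module
  · rw [dE3 q]
    refine Submodule.mem_inf.mpr ⟨Submodule.smul_mem _ _ (e_mem_Ak (by decide)),
      LinearMap.mem_ker.mpr ?_⟩
    rw [map_smul, dE13 q]; module

lemma hker3 (q : ℝ) : Ak 3 ≤ LinearMap.ker (dSP q) := by
  intro v hv
  rw [LinearMap.mem_ker]
  conv_lhs => rw [repr3 hv]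
  simp [dE012 q, dE013 q, dE023 q, dE123 q]

lemma hAk3_eq (q : ℝ) : Ak 3 ⊓ LinearMap.ker (dSP q) = Ak 3 := inf_eq_left.mpr (hker3 q)

lemma hmap2_le (q : ℝ) :
    Submodule.map (dSP q) (Ak 2) ≤ Ak 3 ⊓ LinearMap.ker (dSP q) := by
  rw [Ak, Submodule.map_span, Submodule.span_le]
  rintro x ⟨y, ⟨S, hS, rfl⟩, rfl⟩
  refine Submodule.mem_inf.mpr ⟨?_, ?_⟩
  swap
  · rcases (by decide : ∀ S : ι, S.card = 2 →
      (S = {0,1} ∨ S = {0,2} ∨ S = {0,3} ∨ S = {1,2} ∨ S = {1,3} ∨ S = {2,3})) S hS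
      with rfl | rfl | rfl | rfl | rfl | rfl <;>
    · refine LinearMap.mem_ker.mpr ?_
      rw [show dSP q (dSP q (e _)) = dSP q (dSP q (e _)) from rfl]
      first
      | (rw [dE01 q]; rw [map_smul, dE013 q]; module)
      | (rw [dE02 q]; rw [map_add, map_add, map_add, map_smul, map_smul, map_smul, map_smul,
          dE012 q, dE013 q, dE023 q, dE123 q]; module)
      | (rw [dE03 q]; rw [map_smul, dE123 q]; module)
      | (rw [dE12 q]; rw [map_smul, dE013 q]; module)
      | (rw [dE13 q]; simp)
      | (rw [dE23 q]; rw [map_smul, dE123 q]; module)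
  · rcases (by decide : ∀ S : ι, S.card = 2 →
      (S = {0,1} ∨ S = {0,2} ∨ S = {0,3} ∨ S = {1,2} ∨ S = {1,3} ∨ S = {2,3})) S hS
      with rfl | rfl | rfl | rfl | rfl | rfl
    · rw [dE01 q]; exact Submodule.smul_mem _ _ (e_mem_Ak (by decide))
    · rw [dE02 q]
      exact add_mem (add_mem (add_mem (Submodule.smul_mem _ _ (e_mem_Ak (by decide)))
        (Submodule.smul_mem _ _ (e_mem_Ak (by decide))))
        (Submodule.smul_mem _ _ (e_mem_Ak (by decide))))
        (Submodule.smul_mem _ _ (e_mem_Ak (by decide)))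
    · rw [dE03 q]; exact Submodule.smul_mem _ _ (e_mem_Ak (by decide))
    · rw [dE12 q]; exact Submodule.smul_mem _ _ (e_mem_Ak (by decide))
    · rw [dE13 q]; exact zero_mem _
    · rw [dE23 q]; exact Submodule.smul_mem _ _ (e_mem_Ak (by decide))

lemma mem013 (q : ℝ) : e {0,1,3} ∈ Submodule.map (dSP q) (Ak 2) := by
  rw [← Submodule.smul_mem_iff _ cSP_ne,
    show cSP • e {0,1,3} = dSP q (e {1,2}) from (dE12 q).symm]
  exact Submodule.mem_map_of_mem (e_mem_Ak (by decide))

lemma mem123 (q : ℝ) : e {1,2,3} ∈ Submodule.map (dSP q) (Ak 2) := by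
  rw [← Submodule.smul_mem_iff _ cSP_ne,
    show cSP • e {1,2,3} = dSP q (e {0,3}) from (dE03 q).symm]
  exact Submodule.mem_map_of_mem (e_mem_Ak (by decide))

lemma memsum (q : ℝ) : e {0,1,2} + e {0,2,3} ∈ Submodule.map (dSP q) (Ak 2) := by
  rw [← Submodule.smul_mem_iff _ cSP_ne,
    show cSP • (e {0,1,2} + e {0,2,3}) = dSP q (e {0,2}) +
      (((q : ℂ) * Complex.I) / 2) • e {0,1,3} + (((q : ℂ) * Complex.I) / 2) • e {1,2,3}
      from by rw [dE02 q]; module]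
  exact add_mem (add_mem (Submodule.mem_map_of_mem (e_mem_Ak (by decide)))
    (Submodule.smul_mem _ _ (mem013 q))) (Submodule.smul_mem _ _ (mem123 q))
lemma hK2 (q : ℝ) : Ak 2 ⊓ LinearMap.ker (dSP q) ≤ Submodule.map (dSP q) (Ak 1) := by
  intro v hv
  obtain ⟨hv1, hv2⟩ := Submodule.mem_inf.mp hv
  rw [LinearMap.mem_ker] at hv2
  have h0 := repr2 hv1
  have hd : v {0,1} • dSP q (e {0,1}) + v {0,2} • dSP q (e {0,2}) + v {0,3} • dSP q (e {0,3})
      + v {1,2} • dSP q (e {1,2}) + v {1,3} • dSP q (e {1,3}) + v {2,3} • dSP q (e {2,3}) = 0 := by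
    rw [← map_smul, ← map_smul, ← map_smul, ← map_smul, ← map_smul, ← map_smul,
      ← map_add, ← map_add, ← map_add, ← map_add, ← map_add, ← h0, hv2]
  rw [dE01 q, dE02 q, dE03 q, dE12 q, dE13 q, dE23 q] at hd
  have h012 := congrFun hd {0,1,2}
  have h013 := congrFun hd {0,1,3}
  have h123 := congrFun hd {1,2,3}
  simp (config := { decide := true }) [e] at h012 h013 h123
  have h02 : v {0,2} = 0 := h012.resolve_right cSP_ne
  rw [h02] at h013 h123
  have h12 : v {1,2} = v {0,1} := by
    have h' : (v {1,2} - v {0,1}) * cSP = 0 := by linear_combination h013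
    rcases mul_eq_zero.mp h' with h'' | h''
    · linear_combination h''
    · exact absurd h'' cSP_ne
  have h23 : v {2,3} = -v {0,3} := by
    have h' : (v {2,3} + v {0,3}) * cSP = 0 := by linear_combination h123
    rcases mul_eq_zero.mp h' with h'' | h''
    · linear_combination h''
    · exact absurd h'' cSP_ne
  have hc := cSP_ne
  refine Submodule.mem_map.mpr ⟨(cSP⁻¹ * v {0,1}) • e {0} +
    (cSP⁻¹ * (v {1,3} - (((q:ℂ) * Complex.I) / 2) * (cSP⁻¹ * (v {0,1} + v {0,3})))) • e {1} +
    (cSP⁻¹ * v {0,3}) • e {2},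
    add_mem (add_mem (Submodule.smul_mem _ _ (e_mem_Ak (by decide)))
      (Submodule.smul_mem _ _ (e_mem_Ak (by decide))))
      (Submodule.smul_mem _ _ (e_mem_Ak (by decide))), ?_⟩
  rw [map_add, map_add, map_smul, map_smul, map_smul, dE0 q, dE1 q, dE2 q]
  conv_rhs => rw [h0]
  rw [h02, h12, h23]
  simp only [cSP]
  match_scalars <;> (field_simp; try ring; try (rw [mul_comm, ← mul_assoc, inv_mul_cancel₀ Complex.I_ne_zero, one_mul]))
lemma himg2 (q : ℝ) : Submodule.map (dSP q) (Ak 2) =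
    Submodule.span ℂ (Set.range ![e {0,1,3}, e {1,2,3}, e {0,1,2} + e {0,2,3}]) := by
  apply le_antisymm
  · rw [Ak, Submodule.map_span, Submodule.span_le]
    rintro x ⟨y, ⟨S, hS, rfl⟩, rfl⟩
    have hm0 : e {0,1,3} ∈ Submodule.span ℂ
        (Set.range ![e {0,1,3}, e {1,2,3}, e {0,1,2} + e {0,2,3}]) :=
      Submodule.subset_span ⟨0, rfl⟩
    have hm1 : e {1,2,3} ∈ Submodule.span ℂ
        (Set.range ![e {0,1,3}, e {1,2,3}, e {0,1,2} + e {0,2,3}]) :=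
      Submodule.subset_span ⟨1, rfl⟩
    have hm2 : e {0,1,2} + e {0,2,3} ∈ Submodule.span ℂ
        (Set.range ![e {0,1,3}, e {1,2,3}, e {0,1,2} + e {0,2,3}]) :=
      Submodule.subset_span ⟨2, rfl⟩
    rcases (by decide : ∀ S : ι, S.card = 2 →
      (S = {0,1} ∨ S = {0,2} ∨ S = {0,3} ∨ S = {1,2} ∨ S = {1,3} ∨ S = {2,3})) S hS
      with rfl | rfl | rfl | rfl | rfl | rfl
    · rw [dE01 q]; exact Submodule.smul_mem _ _ hm0
    · rw [dE02 q, show cSP • e {0,1,2} + -(((q:ℂ) * Complex.I) / 2) • e {0,1,3} +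
        cSP • e {0,2,3} + -(((q:ℂ) * Complex.I) / 2) • e {1,2,3} =
        cSP • (e {0,1,2} + e {0,2,3}) + (-(((q:ℂ) * Complex.I) / 2)) • e {0,1,3} +
        (-(((q:ℂ) * Complex.I) / 2)) • e {1,2,3} from by module]
      exact add_mem (add_mem (Submodule.smul_mem _ _ hm2) (Submodule.smul_mem _ _ hm0))
        (Submodule.smul_mem _ _ hm1)
    · rw [dE03 q]; exact Submodule.smul_mem _ _ hm1
    · rw [dE12 q]; exact Submodule.smul_mem _ _ hm0
    · rw [dE13 q]; exact zero_mem _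
    · rw [dE23 q]; exact Submodule.smul_mem _ _ hm1
  · rw [Submodule.span_le]
    rintro x ⟨i, rfl⟩
    fin_cases i
    · exact mem013 q
    · exact mem123 q
    · exact memsum q

lemma g3_mem_Ak3 (q : ℝ) :
    e ({0, 1, 2} : Finset (Fin 4)) - (q : ℂ) • e ({0, 1, 3} : Finset (Fin 4)) -
      e ({0, 2, 3} : Finset (Fin 4)) + (q : ℂ) • e ({1, 2, 3} : Finset (Fin 4)) ∈ Ak 3 :=
  add_mem (sub_mem (sub_mem (e_mem_Ak (by decide))
    (Submodule.smul_mem _ _ (e_mem_Ak (by decide)))) (e_mem_Ak (by decide)))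
    (Submodule.smul_mem _ _ (e_mem_Ak (by decide)))

lemma hsplit (q : ℝ) : Ak 3 = Submodule.map (dSP q) (Ak 2) ⊔
    Submodule.span ℂ {e ({0, 1, 2} : Finset (Fin 4)) - (q : ℂ) • e ({0, 1, 3} : Finset (Fin 4)) -
      e ({0, 2, 3} : Finset (Fin 4)) + (q : ℂ) • e ({1, 2, 3} : Finset (Fin 4))} := by
  apply le_antisymm
  · rw [Ak, Submodule.span_le]
    rintro x ⟨S, hS, rfl⟩
    set g3 : V := e ({0, 1, 2} : Finset (Fin 4)) - (q : ℂ) • e ({0, 1, 3} : Finset (Fin 4)) -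
      e ({0, 2, 3} : Finset (Fin 4)) + (q : ℂ) • e ({1, 2, 3} : Finset (Fin 4)) with hg3def
    have hg3 : g3 ∈ Submodule.map (dSP q) (Ak 2) ⊔ Submodule.span ℂ {g3} :=
      Submodule.mem_sup_right (Submodule.mem_span_singleton_self _)
    have h013 : e {0,1,3} ∈ Submodule.map (dSP q) (Ak 2) ⊔ Submodule.span ℂ {g3} :=
      Submodule.mem_sup_left (mem013 q)
    have h123 : e {1,2,3} ∈ Submodule.map (dSP q) (Ak 2) ⊔ Submodule.span ℂ {g3} :=
      Submodule.mem_sup_left (mem123 q)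
    have hsum : e {0,1,2} + e {0,2,3} ∈ Submodule.map (dSP q) (Ak 2) ⊔ Submodule.span ℂ {g3} :=
      Submodule.mem_sup_left (memsum q)
    have h012 : e {0,1,2} ∈ Submodule.map (dSP q) (Ak 2) ⊔ Submodule.span ℂ {g3} := by
      rw [← Submodule.smul_mem_iff _ (two_ne_zero (α := ℂ)),
        show (2:ℂ) • e {0,1,2} = (e {0,1,2} + e {0,2,3}) + g3 + (q:ℂ) • e {0,1,3} +
          (-(q:ℂ)) • e {1,2,3} from by rw [hg3def]; module]
      exact add_mem (add_mem (add_mem hsum hg3) (Submodule.smul_mem _ _ h013))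
        (Submodule.smul_mem _ _ h123)
    have h023 : e {0,2,3} ∈ Submodule.map (dSP q) (Ak 2) ⊔ Submodule.span ℂ {g3} := by
      rw [show e {0,2,3} = (e {0,1,2} + e {0,2,3}) - e {0,1,2} from by module]
      exact sub_mem hsum h012
    rcases (by decide : ∀ S : ι, S.card = 3 →
      (S = {0,1,2} ∨ S = {0,1,3} ∨ S = {0,2,3} ∨ S = {1,2,3})) S hS
      with rfl | rfl | rfl | rfl
    exacts [h012, h013, h023, h123]
  · refine sup_le ((hmap2_le q).trans inf_le_left) ?_
    rw [Submodule.span_le, Set.singleton_subset_iff]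
    exact g3_mem_Ak3 q

lemma indep3 : LinearIndependent ℂ ![e {0,1,3}, e {1,2,3}, (e {0,1,2} + e {0,2,3} : V)] := by
  rw [Fintype.linearIndependent_iff]
  intro g h
  rw [Fin.sum_univ_three] at h
  simp only [Matrix.cons_val_zero, Matrix.cons_val_one, Matrix.head_cons,
    Matrix.cons_val_two, Matrix.tail_cons] at h
  have h0 := congrFun h {0,1,3}
  have h1 := congrFun h {1,2,3}
  have h2 := congrFun h {0,1,2}
  simp (config := { decide := true }) [e] at h0 h1 h2
  intro i; fin_cases i <;> assumption

lemma indep4 : LinearIndependent ℂ ![e {0,1,2}, e {0,1,3}, e {0,2,3}, (e {1,2,3} : V)] := by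
  rw [Fintype.linearIndependent_iff]
  intro g h
  rw [Fin.sum_univ_four] at h
  simp only [Matrix.cons_val_zero, Matrix.cons_val_one, Matrix.head_cons,
    Matrix.cons_val_two, Matrix.tail_cons, Matrix.cons_val_three] at h
  have h0 := congrFun h {0,1,2}
  have h1 := congrFun h {0,1,3}
  have h2 := congrFun h {0,2,3}
  have h3 := congrFun h {1,2,3}
  simp (config := { decide := true }) [e] at h0 h1 h2 h3
  intro i; fin_cases i <;> assumption

lemma finrank_Ak3 : finrank ℂ (Ak 3 : Submodule ℂ V) = 4 := by
  have hsp : Ak 3 = Submodule.span ℂ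
      (Set.range ![e {0,1,2}, e {0,1,3}, e {0,2,3}, (e {1,2,3} : V)]) := by
    rw [Ak]; congr 1
    ext x
    constructor
    · rintro ⟨S, hS, rfl⟩
      rcases (by decide : ∀ S : ι, S.card = 3 →
        (S = {0,1,2} ∨ S = {0,1,3} ∨ S = {0,2,3} ∨ S = {1,2,3})) S hS with rfl | rfl | rfl | rfl
      exacts [⟨0, rfl⟩, ⟨1, rfl⟩, ⟨2, rfl⟩, ⟨3, rfl⟩]
    · rintro ⟨i, rfl⟩
      fin_cases i
      exacts [⟨{0,1,2}, by decide, rfl⟩, ⟨{0,1,3}, by decide, rfl⟩,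
        ⟨{0,2,3}, by decide, rfl⟩, ⟨{1,2,3}, by decide, rfl⟩]
  rw [hsp, finrank_span_eq_card indep4]
  simp

lemma finrank_map2 (q : ℝ) : finrank ℂ (Submodule.map (dSP q) (Ak 2)) = 3 := by
  rw [himg2 q, finrank_span_eq_card indep3]
  simp

set_option synthInstance.maxHeartbeats 1000000 in
lemma quot_rank (M P : Submodule ℂ V) (hP : P ≤ M) :
    finrank ℂ (↥M ⧸ Submodule.comap M.subtype P) = finrank ℂ M - finrank ℂ P := by
  have h1 := Submodule.finrank_quotient_add_finrank (Submodule.comap M.subtype P)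
  have h2 : finrank ℂ ↥(Submodule.comap M.subtype P) = finrank ℂ ↥P :=
    (Submodule.comapSubtypeEquivOfLe hP).finrank_eq
  omega

lemma betti_eq (d : V →ₗ[ℂ] V) (k j : ℕ) (h : k - 1 = j) :
    betti d k = finrank ℂ (↥(Ak k ⊓ LinearMap.ker d) ⧸
      Submodule.comap (Ak k ⊓ LinearMap.ker d).subtype (Submodule.map d (Ak j))) := by
  subst h; rfl

lemma g1_ne : (e ({1} : Finset (Fin 4)) - e ({3} : Finset (Fin 4)) : V) ≠ 0 := by
  intro h
  have := congrFun h {1}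
  simp (config := { decide := true }) [e] at this
/-- de Rham cohomology of the Inoue S^± double complex (any q ∈ ℝ): b1 = 1, generated by
φ2 - φ̄2; b2 = 0; b3 = 1, generated by φ1∧φ2∧φ̄1 - q φ1∧φ2∧φ̄2 - φ1∧φ̄1∧φ̄2 + q φ2∧φ̄1∧φ̄2. -/
theorem inoue_Spm_de_rham (q : ℝ) :
    betti (dSP q) 1 = 1 ∧ betti (dSP q) 2 = 0 ∧ betti (dSP q) 3 = 1 ∧
    (Ak 1 ⊓ LinearMap.ker (dSP q) =
      Submodule.map (dSP q) (Ak 0) ⊔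
        Submodule.span ℂ {e ({1} : Finset (Fin 4)) - e ({3} : Finset (Fin 4))}) ∧
    (Ak 3 ⊓ LinearMap.ker (dSP q) =
      Submodule.map (dSP q) (Ak 2) ⊔
        Submodule.span ℂ
          {e ({0, 1, 2} : Finset (Fin 4)) - (q : ℂ) • e ({0, 1, 3} : Finset (Fin 4)) -
            e ({0, 2, 3} : Finset (Fin 4)) + (q : ℂ) • e ({1, 2, 3} : Finset (Fin 4))}) := by
  have heq2 : Ak 2 ⊓ LinearMap.ker (dSP q) = Submodule.map (dSP q) (Ak 1) :=
    le_antisymm (hK2 q) (hmap1_le q)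
  refine ⟨?_, ?_, ?_, ?_, ?_⟩
  · rw [betti_eq (dSP q) 1 0 rfl, hmap0 q, quot_rank _ _ bot_le, hK1 q,
      finrank_span_singleton g1_ne, finrank_bot]
  · rw [betti_eq (dSP q) 2 1 rfl, quot_rank _ _ (hmap1_le q), heq2]
    exact Nat.sub_self _
  · rw [betti_eq (dSP q) 3 2 rfl, quot_rank _ _ (hmap2_le q), hAk3_eq q, finrank_Ak3,
      finrank_map2 q]
  · rw [hmap0 q, bot_sup_eq]
    exact hK1 q
  · rw [hAk3_eq q]
    exact hsplit q
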